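/- Consider the birational map φ : K⁴ → K⁴ given by φ(y₀,y₁,y₂,y₃) = (y₁, y₂, y₃, (y₁/y₃)·(y₀+y₁+y₂-H₁) - y₂ - y₃ + H₁), where H₁ ∈ K is a parameter and all relevant denominators are nonzero. Then the three functions G₀ = (y₀+y₁+y₂+y₃-H₁)·y₁·y₂, 𝒢₁ = y₀y₁y₂y₃ + (y₁+y₂)(y₀+y₁+y₂+y₃-H₁)·y₁·y₂, and ℱ₂ = y₀y₂ + y₁y₃ - (y₁+y₂)(y₀+y₁+y₂+y₃-H₁) are invariant under φ: each composed with φ equals itself. -/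

import Mathlib

/-- The three functions `G₀`, `𝒢₁`, `ℱ₂` are invariant under the birational shift map
`φ(y₀,y₁,y₂,y₃) = (y₁,y₂,y₃,y₄)` with
`y₄ = (y₁/y₃)·(y₀+y₁+y₂-H₁) - y₂ - y₃ + H₁`. -/
theorem invariants_of_map {K : Type*} [Field K] (H₁ y₀ y₁ y₂ y₃ : K) (h3 : y₃ ≠ 0)
    (y₄ : K) (hy₄ : y₄ = y₁ / y₃ * (y₀ + y₁ + y₂ - H₁) - y₂ - y₃ + H₁) :
    ((y₁ + y₂ + y₃ + y₄ - H₁) * y₂ * y₃ = (y₀ + y₁ + y₂ + y₃ - H₁) * y₁ * y₂) ∧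
    (y₁ * y₂ * y₃ * y₄ + (y₂ + y₃) * (y₁ + y₂ + y₃ + y₄ - H₁) * y₂ * y₃ =
      y₀ * y₁ * y₂ * y₃ + (y₁ + y₂) * (y₀ + y₁ + y₂ + y₃ - H₁) * y₁ * y₂) ∧
    (y₁ * y₃ + y₂ * y₄ - (y₂ + y₃) * (y₁ + y₂ + y₃ + y₄ - H₁) =
      y₀ * y₂ + y₁ * y₃ - (y₁ + y₂) * (y₀ + y₁ + y₂ + y₃ - H₁)) := by
  subst hy₄
  refine ⟨?_, ?_, ?_⟩ <;> field_simp <;> [skip; ring; ring]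
  ring
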